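/- Let q be a rational with 0 < q < 1 and q ≠ 1/2, and let (p, r) with 0 ≤ p < q < r ≤ 1 be its unique compatible parent pair (so p ⊕ r = q). Then the reduced denominators of p and r are distinct, and: if p.den > r.den then r is the right parent of p (i.e. there exists a rational s with 0 ≤ s < p such that s and r are compatible and s ⊕ r = p), while if r.den > p.den then p is the left parent of r (i.e. there exists a rational s with r < s ≤ 1 such that p and s are compatible and p ⊕ s = r). -/

import Mathlib

/-- Rationals `p, q` (in reduced form) are compatible if `|p.num * q.den - q.num * p.den| = 1`. -/
def FareyCompatible (p q : ℚ) : Prop :=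
  |p.num * (q.den : ℤ) - q.num * (p.den : ℤ)| = 1

/-- The Farey sum (mediant) of two rationals, as a rational number. -/
def fareySum (p q : ℚ) : ℚ :=
  ((p.num : ℚ) + (q.num : ℚ)) / ((p.den : ℚ) + (q.den : ℚ))

private lemma farey_num_den (n m : ℤ) (hm : 0 < m) (h : IsCoprime n m) :
    ((n : ℚ) / (m : ℚ)).num = n ∧ (((n : ℚ) / (m : ℚ)).den : ℤ) = m := by
  have hcop : Nat.Coprime n.natAbs m.natAbs := Int.isCoprime_iff_gcd_eq_one.mp h
  exact ⟨Rat.num_div_eq_of_coprime hm hcop, Rat.den_div_eq_of_coprime hm hcop⟩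

/-- For `q ≠ 1/2` in `(0,1)` with parent pair `(p, r)`, the parents have distinct
denominators; the parent with larger denominator has the other parent's partner as
its own parent: if `p.den > r.den` then `r` is the right parent of `p`, and if
`r.den > p.den` then `p` is the left parent of `r`. -/
theorem parent_of_parent (q p r : ℚ) (h0 : 0 < q) (h1 : q < 1) (hq : q ≠ 1 / 2)
    (hp0 : 0 ≤ p) (hpq : p < q) (hqr : q < r) (hr1 : r ≤ 1)
    (hcompat : FareyCompatible p r) (hsum : fareySum p r = q) :
    p.den ≠ r.den ∧
      (r.den < p.den →
        ∃ s : ℚ, 0 ≤ s ∧ s < p ∧ FareyCompatible s r ∧ fareySum s r = p) ∧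
      (p.den < r.den →
        ∃ s : ℚ, r < s ∧ s ≤ 1 ∧ FareyCompatible p s ∧ fareySum p s = r) := by
  have hb0 : (0:ℤ) < (p.den:ℤ) := by exact_mod_cast p.pos
  have hd0 : (0:ℤ) < (r.den:ℤ) := by exact_mod_cast r.pos
  have hbQ : (0:ℚ) < (p.den:ℚ) := by exact_mod_cast hb0
  have hdQ : (0:ℚ) < (r.den:ℚ) := by exact_mod_cast hd0
  have hprlt : p < r := hpq.trans hqr
  have hpr : p.num * (r.den:ℤ) < r.num * (p.den:ℤ) := by
    rw [← Rat.num_div_den p, ← Rat.num_div_den r, div_lt_div_iff₀ hbQ hdQ] at hprlt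
    exact_mod_cast hprlt
  have key : r.num * (p.den:ℤ) - p.num * (r.den:ℤ) = 1 := by
    rcases (abs_eq (by norm_num : (0:ℤ) ≤ 1)).mp hcompat with h | h <;> linarith
  have ha0 : 0 ≤ p.num := Rat.num_nonneg.mpr hp0
  have hc1 : 0 < r.num := Rat.num_pos.mpr (h0.trans hqr)
  have hcd : r.num ≤ (r.den:ℤ) := by
    rw [← Rat.num_div_den r, div_le_one hdQ] at hr1
    exact_mod_cast hr1
  have hne : p.den ≠ r.den := by
    intro h
    have hbd : (p.den:ℤ) = (r.den:ℤ) := by exact_mod_cast h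
    have h1' : (p.den:ℤ) * (r.num - p.num) = 1 := by linear_combination key - p.num * hbd
    have hb1 : (p.den:ℤ) = 1 := Int.eq_one_of_mul_eq_one_right hb0.le h1'
    have hpden1 : p.den = 1 := by exact_mod_cast hb1
    have hpnum : (p.num : ℚ) = p := (Rat.den_eq_one_iff p).mp hpden1
    have hplt1 : p < 1 := lt_trans hpq h1
    have hpnum0 : p.num = 0 := by
      have h2 : (p.num : ℚ) < 1 := by rw [hpnum]; exact hplt1
      have h3 : p.num < 1 := by exact_mod_cast h2
      omega
    have hrden1 : r.den = 1 := by omega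
    have hrnum1 : r.num = 1 := by
      rw [hpnum0, hbd] at h1'
      have e : (r.den:ℤ) = 1 := by exact_mod_cast hrden1
      rw [e, one_mul, sub_zero] at h1'
      exact h1'
    apply hq
    rw [← hsum]
    unfold fareySum
    rw [hpnum0, hrnum1, hpden1, hrden1]
    norm_num
  refine ⟨hne, ?_, ?_⟩
  · -- r.den < p.den : s = (a-c)/(b-d)
    intro hlt
    set n : ℤ := p.num - r.num with hn
    set m : ℤ := (p.den:ℤ) - (r.den:ℤ) with hmdef
    have hm : 0 < m := by
      have : (r.den:ℤ) < (p.den:ℤ) := by exact_mod_cast hlt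
      omega
    have cop : IsCoprime n m := ⟨-(r.den:ℤ), r.num, by rw [hn, hmdef]; ring_nf; linarith [key]⟩
    obtain ⟨snum, sden⟩ := farey_num_den n m hm cop
    set s : ℚ := (n:ℚ)/(m:ℚ) with hs
    have hmQ : (0:ℚ) < (m:ℚ) := by exact_mod_cast hm
    have hn0 : 0 ≤ n := by nlinarith [key, hm, hc1, hd0]
    have sdenQ : ((s.den : ℚ)) = (m:ℚ) := by exact_mod_cast sden
    refine ⟨s, ?_, ?_, ?_, ?_⟩
    · exact div_nonneg (by exact_mod_cast hn0) hmQ.le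
    · rw [hs, ← Rat.num_div_den p, div_lt_div_iff₀ hmQ hbQ]
      have : n * (p.den:ℤ) < p.num * m := by nlinarith [key]
      exact_mod_cast this
    · unfold FareyCompatible
      rw [snum, sden, abs_eq (by norm_num : (0:ℤ) ≤ 1)]
      right; rw [hn, hmdef]; linarith [key]
    · unfold fareySum
      rw [snum, sdenQ,
        show ((n:ℤ):ℚ) + (r.num:ℚ) = (p.num:ℚ) by rw [hn]; push_cast; ring,
        show ((m:ℤ):ℚ) + (r.den:ℚ) = (p.den:ℚ) by rw [hmdef]; push_cast; ring]
      exact Rat.num_div_den p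
  · -- p.den < r.den : s = (c-a)/(d-b)
    intro hlt
    set n : ℤ := r.num - p.num with hn
    set m : ℤ := (r.den:ℤ) - (p.den:ℤ) with hmdef
    have hm : 0 < m := by
      have : (p.den:ℤ) < (r.den:ℤ) := by exact_mod_cast hlt
      omega
    have cop : IsCoprime n m := ⟨(p.den:ℤ), -p.num, by rw [hn, hmdef]; ring_nf; linarith [key]⟩
    obtain ⟨snum, sden⟩ := farey_num_den n m hm cop
    set s : ℚ := (n:ℚ)/(m:ℚ) with hs
    have hmQ : (0:ℚ) < (m:ℚ) := by exact_mod_cast hm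
    have sdenQ : ((s.den : ℚ)) = (m:ℚ) := by exact_mod_cast sden
    have hcd' : r.num < (r.den:ℤ) := by
      rcases lt_or_eq_of_le hcd with h | h
      · exact h
      · exfalso
        have hd2 : 2 ≤ (r.den:ℤ) := by
          have : (p.den:ℤ) < (r.den:ℤ) := by exact_mod_cast hlt
          omega
        have hred := r.reduced
        have habs : r.num.natAbs = r.den := by
          have : r.num = (r.den:ℤ) := h
          omega
        rw [habs] at hred
        have : r.den = 1 := by rwa [Nat.Coprime, Nat.gcd_self] at hred
        omega
    refine ⟨s, ?_, ?_, ?_, ?_⟩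
    · rw [hs, ← Rat.num_div_den r, div_lt_div_iff₀ hdQ hmQ]
      have : r.num * m < n * (r.den:ℤ) := by nlinarith [key]
      exact_mod_cast this
    · rw [hs, div_le_one hmQ]
      have : n ≤ m := by nlinarith [key, hcd', hm, hb0, hd0]
      exact_mod_cast this
    · unfold FareyCompatible
      rw [snum, sden, abs_eq (by norm_num : (0:ℤ) ≤ 1)]
      right; rw [hn, hmdef]; linarith [key]
    · unfold fareySum
      rw [snum, sdenQ,
        show (p.num:ℚ) + ((n:ℤ):ℚ) = (r.num:ℚ) by rw [hn]; push_cast; ring,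
        show (p.den:ℚ) + ((m:ℤ):ℚ) = (r.den:ℚ) by rw [hmdef]; push_cast; ring]
      exact Rat.num_div_den r
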